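/- Let E be a finitely complete category equipped with a weak factorization system (L, R) such that: R-maps are exponentiable, L-maps are preserved by pullback along R-maps, and any L-map between R-maps over a common base is substitution-stable. Then the comprehension category on E whose types over Γ are R-maps into Γ has weakly stable identity types: for every R-map p : A → Γ, factoring the fibered diagonal A → A ×_Γ A as an L-map followed by an R-map yields (Id_A, r_A) all of whose pullbacks admit elimination fillers. -/

import Mathlib

open CategoryTheory Limits

universe v u

/-- A weak factorization system `(L, R)` on `C`: every map factors as an `L`-map followed by
an `R`-map, and the two classes are characterized by the lifting property against each other. -/
structure WFS (C : Type u) [Category.{v} C] where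
  L : MorphismProperty C
  R : MorphismProperty C
  llp : ∀ {A B : C} (f : A ⟶ B),
    L f ↔ ∀ {X Y : C} (g : X ⟶ Y), R g → HasLiftingProperty f g
  rlp : ∀ {X Y : C} (g : X ⟶ Y),
    R g ↔ ∀ {A B : C} (f : A ⟶ B), L f → HasLiftingProperty f g
  fact : ∀ {X Y : C} (f : X ⟶ Y),
    ∃ (Z : C) (i : X ⟶ Z) (p : Z ⟶ Y), L i ∧ R p ∧ i ≫ p = f

variable {C : Type u} [Category.{v} C] [HasPullbacks C]

/-- The pullback ("substitution") of a map `i : A ⟶ B` between objects `p : A ⟶ Γ`,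
`q : B ⟶ Γ` over `Γ`, along `f : Γ' ⟶ Γ`. -/
noncomputable def pbMap {Γ A B : C} (p : A ⟶ Γ) (q : B ⟶ Γ) (i : A ⟶ B) (hi : i ≫ q = p)
    {Γ' : C} (f : Γ' ⟶ Γ) : pullback p f ⟶ pullback q f :=
  pullback.map p f q f i (𝟙 Γ') (𝟙 Γ) (by rw [Category.comp_id, hi]) (by simp)

/-- `i : A ⟶ B`, a map over `Γ`, is substitution-stable in `Γ` (w.r.t. a wfs `W`):
its pullback along any map `Γ' ⟶ Γ` is an `L`-map. -/
def SubStable (W : WFS C) {Γ A B : C} (p : A ⟶ Γ) (q : B ⟶ Γ) (i : A ⟶ B)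
    (hi : i ≫ q = p) : Prop :=
  ∀ {Γ' : C} (f : Γ' ⟶ Γ), W.L (pbMap p q i hi f)

variable [HasFiniteLimits C]

/-- The comparison map `A' ×_{Γ'} A' ⟶ A ×_Γ A` induced by pulling back `p : A ⟶ Γ`
along `f : Γ' ⟶ Γ` (where `A' = Γ' ×_Γ A` and `p' = pullback.snd p f`). -/
noncomputable def sqMap {Γ Γ' A : C} (p : A ⟶ Γ) (f : Γ' ⟶ Γ) :
    pullback (pullback.snd p f) (pullback.snd p f) ⟶ pullback p p :=
  pullback.map (pullback.snd p f) (pullback.snd p f) p p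
    (pullback.fst p f) (pullback.fst p f) f
    pullback.condition.symm pullback.condition.symm


set_option linter.unusedSectionVars false

/-- The `R`-class of a wfs is closed under composition. -/
lemma WFS.R_comp (W : WFS C) {X Y Z : C} {g : X ⟶ Y} {h : Y ⟶ Z}
    (hg : W.R g) (hh : W.R h) : W.R (g ≫ h) := by
  rw [W.rlp]
  intro A B f hf
  have := (W.rlp g).mp hg f hf
  have := (W.rlp h).mp hh f hf
  infer_instance

/-- The `R`-class of a wfs is stable under base change:
`pullback.fst f g` is the base change of `g` along `f`. -/
lemma WFS.R_fst (W : WFS C) {X Y Z : C} (f : X ⟶ Z) (g : Y ⟶ Z)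
    (hg : W.R g) : W.R (pullback.fst f g) := by
  rw [W.rlp]
  intro A B i hi
  have H := (W.rlp g).mp hg i hi
  constructor
  intro u v sq
  have sq2 : CommSq (u ≫ pullback.snd f g) i g (v ≫ f) := by
    constructor
    rw [← Category.assoc, ← sq.w, Category.assoc, Category.assoc, ← pullback.condition]
  obtain ⟨⟨l⟩⟩ := H.sq_hasLift sq2
  exact ⟨⟨⟨pullback.lift v l.l l.fac_right.symm,
    by apply pullback.hom_ext <;> simp [sq.w, l.fac_left, pullback.lift_fst, pullback.lift_snd, pullback.lift_fst_assoc, pullback.lift_snd_assoc], by simp [pullback.lift_fst, pullback.lift_snd, pullback.lift_fst_assoc, pullback.lift_snd_assoc]⟩⟩⟩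

/-- The `L`-class of a wfs is closed under post-composition with an isomorphism. -/
lemma WFS.L_comp_iso (W : WFS C) {X Y Z : C} {g : X ⟶ Y} (e : Y ⟶ Z) [IsIso e]
    (hg : W.L g) : W.L (g ≫ e) := by
  rw [W.llp]
  intro A B c hc
  have := (W.llp g).mp hg c hc
  infer_instance

section IsoAux

variable {Γ Γ' A I : C} (p : A ⟶ Γ) (f : Γ' ⟶ Γ) (qI : I ⟶ pullback p p)

/-- Comparison map from the pullback of `qI` along `sqMap p f` to the pullback of
`I ⟶ Γ` along `f`. -/
noncomputable def phi :
    pullback qI (sqMap p f) ⟶ pullback (qI ≫ pullback.fst p p ≫ p) f :=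
  pullback.lift (pullback.fst qI (sqMap p f))
    (pullback.snd qI (sqMap p f) ≫ pullback.fst _ _ ≫ pullback.snd p f)
    (by
      rw [← Category.assoc, pullback.condition]
      simp only [sqMap, Category.assoc, pullback.lift_fst_assoc]
      rw [pullback.condition])

/-- First component `pullback (I ⟶ Γ) f ⟶ pullback p f`. -/
noncomputable def psiA1 : pullback (qI ≫ pullback.fst p p ≫ p) f ⟶ pullback p f :=
  pullback.lift (pullback.fst _ f ≫ qI ≫ pullback.fst p p) (pullback.snd _ f)
    (by simpa using pullback.condition)

/-- Second component `pullback (I ⟶ Γ) f ⟶ pullback p f`. -/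
noncomputable def psiA2 : pullback (qI ≫ pullback.fst p p ≫ p) f ⟶ pullback p f :=
  pullback.lift (pullback.fst _ f ≫ qI ≫ pullback.snd p p) (pullback.snd _ f)
    (by simp only [Category.assoc]
        rw [show pullback.snd p p ≫ p = pullback.fst p p ≫ p from pullback.condition.symm]
        simpa using pullback.condition)

/-- Inverse comparison map. -/
noncomputable def psi :
    pullback (qI ≫ pullback.fst p p ≫ p) f ⟶ pullback qI (sqMap p f) :=
  pullback.lift (pullback.fst _ f)
    (pullback.lift (psiA1 p f qI) (psiA2 p f qI) (by simp [psiA1, psiA2, pullback.lift_fst, pullback.lift_snd, pullback.lift_fst_assoc, pullback.lift_snd_assoc]))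
    (by
      apply pullback.hom_ext <;>
        simp [sqMap, psiA1, psiA2, pullback.lift_fst, pullback.lift_snd, pullback.lift_fst_assoc, pullback.lift_snd_assoc])

lemma phi_psi : phi p f qI ≫ psi p f qI = 𝟙 _ := by
  apply pullback.hom_ext
  · simp [phi, psi, pullback.lift_fst, pullback.lift_snd, pullback.lift_fst_assoc, pullback.lift_snd_assoc]
  · apply pullback.hom_ext <;> apply pullback.hom_ext <;>
      simp [phi, psi, psiA1, psiA2, pullback.condition_assoc, pullback.condition, pullback.lift_fst, pullback.lift_snd, pullback.lift_fst_assoc, pullback.lift_snd_assoc]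
    · congr 1; exact pullback.lift_fst _ _ _
    · congr 1; exact pullback.lift_snd _ _ _

lemma psi_phi : psi p f qI ≫ phi p f qI = 𝟙 _ := by
  apply pullback.hom_ext <;> simp [phi, psi, psiA1, psiA2, pullback.lift_fst, pullback.lift_snd, pullback.lift_fst_assoc, pullback.lift_snd_assoc]

end IsoAux

/-- given a wfs `(L, R)` on a finitely complete category in which `R`-maps are
exponentiable, `L`-maps are preserved by pullback along `R`-maps, and `L`-maps between
`R`-maps over a common base are substitution-stable, the comprehension category of `R`-maps
has weakly stable identity types: for every `R`-map `p : A ⟶ Γ`, factoring the fibered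
diagonal `A ⟶ A ×_Γ A` as an `L`-map followed by an `R`-map gives `(Id_A, r_A)` all of
whose pullbacks admit elimination fillers. -/
theorem stmt17 (W : WFS C)
    (hexp : ∀ {X Y : C} (g : Y ⟶ X), W.R g → (Over.pullback g).IsLeftAdjoint)
    (hLR : ∀ {A B X : C} (i : A ⟶ B) (g : X ⟶ B), W.L i → W.R g →
      W.L (pullback.fst g i))
    (hsub : ∀ (Γ : C) {A B : C} (p : A ⟶ Γ) (q : B ⟶ Γ) (i : A ⟶ B) (hi : i ≫ q = p),
      W.R p → W.R q → W.L i → SubStable W p q i hi) :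
    ∀ {Γ A : C} (p : A ⟶ Γ), W.R p →
      ∃ (I : C) (r : A ⟶ I) (qI : I ⟶ pullback p p),
        r ≫ qI = pullback.diagonal p ∧ W.L r ∧ W.R qI ∧
        -- weak stability: every pullback of `(I, r)` is again an identity type, i.e.
        -- admits elimination fillers
        ∀ {Γ' : C} (f : Γ' ⟶ Γ) (r' : pullback p f ⟶ pullback qI (sqMap p f)),
          r' ≫ pullback.snd qI (sqMap p f) = pullback.diagonal (pullback.snd p f) →
          r' ≫ pullback.fst qI (sqMap p f) = pullback.fst p f ≫ r →
          ∀ (Ct : C) (c : Ct ⟶ pullback qI (sqMap p f)), W.R c →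
            ∀ (d : pullback p f ⟶ Ct), d ≫ c = r' →
              ∃ j : pullback qI (sqMap p f) ⟶ Ct, j ≫ c = 𝟙 _ ∧ r' ≫ j = d := by

  intro Γ A p hp
  obtain ⟨I, r, qI, hLr, hRqI, hcomp⟩ := W.fact (pullback.diagonal p)
  refine ⟨I, r, qI, hcomp, hLr, hRqI, ?_⟩
  intro Γ' f r' hr1 hr2 Ct c hc d hd
  have hq : W.R (qI ≫ pullback.fst p p ≫ p) :=
    W.R_comp hRqI (W.R_comp (W.R_fst p p hp) hp)
  have hr : r ≫ (qI ≫ pullback.fst p p ≫ p) = p := by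
    rw [← Category.assoc, hcomp, ← Category.assoc, pullback.diagonal_fst, Category.id_comp]
  have hLpb : W.L (pbMap p (qI ≫ pullback.fst p p ≫ p) r hr f) :=
    hsub Γ p (qI ≫ pullback.fst p p ≫ p) r hr hp hq hLr f
  have hiso : IsIso (psi p f qI) := ⟨phi p f qI, psi_phi p f qI, phi_psi p f qI⟩
  have hr'eq : r' = pbMap p (qI ≫ pullback.fst p p ≫ p) r hr f ≫ psi p f qI := by
    apply pullback.hom_ext
    · rw [hr2]
      simp [pbMap, psi, pullback.lift_fst, pullback.lift_snd, pullback.lift_fst_assoc, pullback.lift_snd_assoc]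
    · rw [hr1]
      apply pullback.hom_ext <;> apply pullback.hom_ext <;>
        simp [pbMap, psi, psiA1, psiA2, reassoc_of% hcomp, pullback.lift_fst, pullback.lift_snd, pullback.lift_fst_assoc, pullback.lift_snd_assoc]
  have hLr' : W.L r' := by
    rw [hr'eq]
    exact W.L_comp_iso _ hLpb
  have hlift := (W.llp r').mp hLr' c hc
  have sq : CommSq d r' c (𝟙 _) := ⟨by simp [hd]⟩
  obtain ⟨⟨l⟩⟩ := hlift.sq_hasLift sq
  exact ⟨l.l, by simpa using l.fac_right, l.fac_left⟩
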